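/- Let ℓ ∈ ℤ and j₂, j₃ ∈ ℂ with 1/2 + j₂ + j₃ = ℓ. Define on D = {(w₁, w₂, w₃) ∈ ℝ³ : w₁ > w₂ > w₃} the function F(w₁, w₂, w₃) := (w₁−w₂)^{(j₃ − ℓ/2)(ℓ−1)} · (w₁−w₃)^{−j₂ − (j₃ − (ℓ+1)/2)ℓ} · (w₂−w₃)^{−1/2 − (j₃ − (ℓ+1)/2)ℓ}. Then at every point of D: ∂₁²F + (j₂/(w₁−w₂) + (j₃−ℓ)/(w₁−w₃))·∂₁F − (1/2)·(∂₂F/(w₁−w₂) + ∂₃F/(w₁−w₃)) − ((j₃ℓ − ℓ(ℓ+1)/2)/(2(w₁−w₃)²))·F = (ℓ−1)(ℓ−2)(j₂ − ℓ/2)(j₂ − (ℓ−1)/2) · (w₁−w₂)^{−j₂(ℓ−1) + (ℓ²−2ℓ−3)/2} · (w₁−w₃)^{j₂(ℓ−1) − (ℓ²−2ℓ+4)/2} · (w₂−w₃)^{j₂ℓ − (ℓ²−2ℓ−3)/2}. -/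

import Mathlib

/-- The partial derivative in the `i`-th direction of a function of three
real variables. -/
noncomputable def pderiv3 (F : (Fin 3 → ℝ) → ℂ) (i : Fin 3) (w : Fin 3 → ℝ) : ℂ :=
  fderiv ℝ F w (Pi.single i 1)

/-- The Ward-identity form of the 3-point function
`⟨φ_{1/2}(w₁) φ_{j₂}(w₂) φ_{j₃}^ℓ(w₃)⟩` of bosonic ghost primaries. -/
noncomputable def ghost3pt (ℓ : ℤ) (j₂ j₃ : ℂ) (w : Fin 3 → ℝ) : ℂ :=
  ((w 0 - w 1 : ℝ) : ℂ) ^ ((j₃ - (ℓ : ℂ) / 2) * ((ℓ : ℂ) - 1))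
    * ((w 0 - w 2 : ℝ) : ℂ) ^ (-j₂ - (j₃ - ((ℓ : ℂ) + 1) / 2) * (ℓ : ℂ))
    * ((w 1 - w 2 : ℝ) : ℂ) ^ (-(1 / 2 : ℂ) - (j₃ - ((ℓ : ℂ) + 1) / 2) * (ℓ : ℂ))

/-- Generic power-product Ansatz. -/
noncomputable def Pf (a b c : ℂ) (w : Fin 3 → ℝ) : ℂ :=
  ((w 0 - w 1 : ℝ) : ℂ) ^ a * ((w 0 - w 2 : ℝ) : ℂ) ^ b * ((w 1 - w 2 : ℝ) : ℂ) ^ c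

/-- The differential of the coordinate difference. -/
noncomputable def Dm (i j : Fin 3) : (Fin 3 → ℝ) →L[ℝ] ℂ :=
  Complex.ofRealCLM.comp
    ((ContinuousLinearMap.proj i : (Fin 3 → ℝ) →L[ℝ] ℝ)
      - (ContinuousLinearMap.proj j : (Fin 3 → ℝ) →L[ℝ] ℝ))

lemma hasFDerivAt_coord (i j : Fin 3) (w : Fin 3 → ℝ) :
    HasFDerivAt (fun w : Fin 3 → ℝ => ((w i - w j : ℝ) : ℂ)) (Dm i j) w :=
  (Dm i j).hasFDerivAt.congr_of_eventuallyEq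
    (Filter.Eventually.of_forall fun x => by simp [Dm])

lemma hasFDerivAt_cpow_coord (a : ℂ) (i j : Fin 3) {w : Fin 3 → ℝ} (h : w j < w i) :
    HasFDerivAt (fun w : Fin 3 → ℝ => ((w i - w j : ℝ) : ℂ) ^ a)
      ((a * ((w i - w j : ℝ) : ℂ) ^ (a - 1)) • Dm i j) w := by
  have hs : ((w i - w j : ℝ) : ℂ) ∈ Complex.slitPlane :=
    Complex.ofReal_mem_slitPlane.2 (by linarith)
  have hz : HasDerivAt (fun z : ℂ => z ^ a)
      (a * ((w i - w j : ℝ) : ℂ) ^ (a - 1)) ((w i - w j : ℝ) : ℂ) :=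
    (Complex.hasStrictDerivAt_cpow_const hs).hasDerivAt
  exact hz.comp_hasFDerivAt w (hasFDerivAt_coord i j w)

lemma hasFDerivAt_Pf (a b c : ℂ) {w : Fin 3 → ℝ} (h2 : w 2 < w 1) (h1 : w 1 < w 0) :
    HasFDerivAt (Pf a b c)
      ((((w 0 - w 1 : ℝ) : ℂ) ^ a * ((w 0 - w 2 : ℝ) : ℂ) ^ b) •
          ((c * ((w 1 - w 2 : ℝ) : ℂ) ^ (c - 1)) • Dm 1 2)
        + ((w 1 - w 2 : ℝ) : ℂ) ^ c •
          (((w 0 - w 1 : ℝ) : ℂ) ^ a • ((b * ((w 0 - w 2 : ℝ) : ℂ) ^ (b - 1)) • Dm 0 2)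
            + ((w 0 - w 2 : ℝ) : ℂ) ^ b • ((a * ((w 0 - w 1 : ℝ) : ℂ) ^ (a - 1)) • Dm 0 1)))
      w :=
  ((hasFDerivAt_cpow_coord a 0 1 h1).mul
      (hasFDerivAt_cpow_coord b 0 2 (h2.trans h1))).mul
    (hasFDerivAt_cpow_coord c 1 2 h2)

lemma diff_Pf (a b c : ℂ) {w : Fin 3 → ℝ} (h2 : w 2 < w 1) (h1 : w 1 < w 0) :
    DifferentiableAt ℝ (Pf a b c) w :=
  (hasFDerivAt_Pf a b c h2 h1).differentiableAt

lemma pd0 (a b c : ℂ) {w : Fin 3 → ℝ} (h2 : w 2 < w 1) (h1 : w 1 < w 0) :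
    pderiv3 (Pf a b c) 0 w = a * Pf (a - 1) b c w + b * Pf a (b - 1) c w := by
  show fderiv ℝ (Pf a b c) w (Pi.single 0 1) = _
  rw [(hasFDerivAt_Pf a b c h2 h1).fderiv]
  simp [Dm, Pf, Pi.single_apply]
  ring

lemma pd1 (a b c : ℂ) {w : Fin 3 → ℝ} (h2 : w 2 < w 1) (h1 : w 1 < w 0) :
    pderiv3 (Pf a b c) 1 w = c * Pf a b (c - 1) w - a * Pf (a - 1) b c w := by
  show fderiv ℝ (Pf a b c) w (Pi.single 1 1) = _
  rw [(hasFDerivAt_Pf a b c h2 h1).fderiv]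
  simp [Dm, Pf, Pi.single_apply]
  ring

lemma pd2 (a b c : ℂ) {w : Fin 3 → ℝ} (h2 : w 2 < w 1) (h1 : w 1 < w 0) :
    pderiv3 (Pf a b c) 2 w = -(c * Pf a b (c - 1) w) - b * Pf a (b - 1) c w := by
  show fderiv ℝ (Pf a b c) w (Pi.single 2 1) = _
  rw [(hasFDerivAt_Pf a b c h2 h1).fderiv]
  simp [Dm, Pf, Pi.single_apply]
  ring

lemma pd00 (a b c : ℂ) {w : Fin 3 → ℝ} (h2 : w 2 < w 1) (h1 : w 1 < w 0) :
    pderiv3 (pderiv3 (Pf a b c) 0) 0 w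
      = a * ((a - 1) * Pf (a - 1 - 1) b c w + b * Pf (a - 1) (b - 1) c w)
        + b * (a * Pf (a - 1) (b - 1) c w + (b - 1) * Pf a (b - 1 - 1) c w) := by
  have hopen : IsOpen {x : Fin 3 → ℝ | x 2 < x 1 ∧ x 1 < x 0} :=
    (isOpen_lt (continuous_apply 2) (continuous_apply 1)).inter
      (isOpen_lt (continuous_apply 1) (continuous_apply 0))
  have hev : pderiv3 (Pf a b c) 0
      =ᶠ[nhds w] fun x => a * Pf (a - 1) b c x + b * Pf a (b - 1) c x :=
    Filter.eventuallyEq_of_mem (hopen.mem_nhds ⟨h2, h1⟩) fun x hx => pd0 a b c hx.1 hx.2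
  show fderiv ℝ (pderiv3 (Pf a b c) 0) w (Pi.single 0 1) = _
  rw [hev.fderiv_eq]
  have e1 : fderiv ℝ (fun x => a * Pf (a - 1) b c x) w (Pi.single 0 1)
      = a * ((a - 1) * Pf (a - 1 - 1) b c w + b * Pf (a - 1) (b - 1) c w) := by
    rw [fderiv_const_mul (diff_Pf (a - 1) b c h2 h1) a]
    simp only [ContinuousLinearMap.coe_smul', Pi.smul_apply, smul_eq_mul]
    congr 1
    exact pd0 (a - 1) b c h2 h1
  have e2 : fderiv ℝ (fun x => b * Pf a (b - 1) c x) w (Pi.single 0 1)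
      = b * (a * Pf (a - 1) (b - 1) c w + (b - 1) * Pf a (b - 1 - 1) c w) := by
    rw [fderiv_const_mul (diff_Pf a (b - 1) c h2 h1) b]
    simp only [ContinuousLinearMap.coe_smul', Pi.smul_apply, smul_eq_mul]
    congr 1
    exact pd0 a (b - 1) c h2 h1
  rw [fderiv_fun_add ((diff_Pf (a - 1) b c h2 h1).const_mul a)
      ((diff_Pf a (b - 1) c h2 h1).const_mul b)]
  rw [ContinuousLinearMap.add_apply, e1, e2]

set_option maxHeartbeats 4000000 in
/-- The BPZ equation, with source term, satisfied by the Ward-identity form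
of the 3-point function `⟨φ_{1/2}(w₁) φ_{j₂}(w₂) φ_{j₃}^ℓ(w₃)⟩`. -/
theorem ghost_three_point_bpz (ℓ : ℤ) (j₂ j₃ : ℂ) (hsum : 1 / 2 + j₂ + j₃ = ℓ) :
    ∀ w : Fin 3 → ℝ, w 2 < w 1 → w 1 < w 0 →
      pderiv3 (pderiv3 (ghost3pt ℓ j₂ j₃) 0) 0 w
        + (j₂ / ((w 0 - w 1 : ℝ) : ℂ) + (j₃ - (ℓ : ℂ)) / ((w 0 - w 2 : ℝ) : ℂ))
            * pderiv3 (ghost3pt ℓ j₂ j₃) 0 w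
        - (1 / 2) * (pderiv3 (ghost3pt ℓ j₂ j₃) 1 w / ((w 0 - w 1 : ℝ) : ℂ)
            + pderiv3 (ghost3pt ℓ j₂ j₃) 2 w / ((w 0 - w 2 : ℝ) : ℂ))
        - ((j₃ * (ℓ : ℂ) - (ℓ : ℂ) * ((ℓ : ℂ) + 1) / 2)
            / (2 * ((w 0 - w 2 : ℝ) : ℂ) ^ 2)) * ghost3pt ℓ j₂ j₃ w
      = ((ℓ : ℂ) - 1) * ((ℓ : ℂ) - 2) * (j₂ - (ℓ : ℂ) / 2) * (j₂ - ((ℓ : ℂ) - 1) / 2)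
          * ((w 0 - w 1 : ℝ) : ℂ) ^ (-j₂ * ((ℓ : ℂ) - 1) + ((ℓ : ℂ) ^ 2 - 2 * (ℓ : ℂ) - 3) / 2)
          * ((w 0 - w 2 : ℝ) : ℂ) ^ (j₂ * ((ℓ : ℂ) - 1) - ((ℓ : ℂ) ^ 2 - 2 * (ℓ : ℂ) + 4) / 2)
          * ((w 1 - w 2 : ℝ) : ℂ) ^ (j₂ * (ℓ : ℂ) - ((ℓ : ℂ) ^ 2 - 2 * (ℓ : ℂ) - 3) / 2) := by
  have hj3 : j₃ = (ℓ : ℂ) - 1 / 2 - j₂ := by linear_combination hsum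
  subst hj3
  intro w h2 h1
  set a : ℂ := (((ℓ : ℂ) - 1 / 2 - j₂) - (ℓ : ℂ) / 2) * ((ℓ : ℂ) - 1) with ha
  set b : ℂ := -j₂ - (((ℓ : ℂ) - 1 / 2 - j₂) - ((ℓ : ℂ) + 1) / 2) * (ℓ : ℂ) with hb
  set c : ℂ := -(1 / 2 : ℂ) - (((ℓ : ℂ) - 1 / 2 - j₂) - ((ℓ : ℂ) + 1) / 2) * (ℓ : ℂ) with hc
  have hgh : ghost3pt ℓ j₂ ((ℓ : ℂ) - 1 / 2 - j₂) = Pf a b c := rfl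
  clear_value a b c
  rw [hgh, pd00 a b c h2 h1, pd0 a b c h2 h1, pd1 a b c h2 h1, pd2 a b c h2 h1]
  -- nonvanishing
  have hU : ((w 0 - w 1 : ℝ) : ℂ) ≠ 0 :=
    Complex.ofReal_ne_zero.mpr (sub_ne_zero.mpr (ne_of_gt h1))
  have hV : ((w 0 - w 2 : ℝ) : ℂ) ≠ 0 :=
    Complex.ofReal_ne_zero.mpr (sub_ne_zero.mpr (ne_of_gt (h2.trans h1)))
  have hT : ((w 1 - w 2 : ℝ) : ℂ) ≠ 0 :=
    Complex.ofReal_ne_zero.mpr (sub_ne_zero.mpr (ne_of_gt h2))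
  -- exponents of the right-hand side
  have eA : -j₂ * ((ℓ : ℂ) - 1) + ((ℓ : ℂ) ^ 2 - 2 * (ℓ : ℂ) - 3) / 2 = a - 1 - 1 := by
    rw [ha]; ring
  have eB : j₂ * ((ℓ : ℂ) - 1) - ((ℓ : ℂ) ^ 2 - 2 * (ℓ : ℂ) + 4) / 2 = b - 1 - 1 := by
    rw [hb]; ring
  have eC : j₂ * (ℓ : ℂ) - ((ℓ : ℂ) ^ 2 - 2 * (ℓ : ℂ) - 3) / 2 = c + 2 := by
    rw [hc]; ring
  rw [eA, eB, eC]
  simp only [Pf]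
  rw [show (a - 1 - 1 : ℂ) = a - 2 by ring, show (b - 1 - 1 : ℂ) = b - 2 by ring]
  have hVUT : ((w 0 - w 2 : ℝ) : ℂ) = ((w 0 - w 1 : ℝ) : ℂ) + ((w 1 - w 2 : ℝ) : ℂ) := by
    push_cast; ring
  rw [hVUT] at hV ⊢
  set U := ((w 0 - w 1 : ℝ) : ℂ) with hUdef
  set T := ((w 1 - w 2 : ℝ) : ℂ) with hTdef
  clear_value U T
  -- express all complex powers through the lowest exponents
  have rU0 : U ^ a = U ^ (a - 2) * U ^ (2 : ℕ) := by
    rw [show a = (a - 2) + 2 by ring, Complex.cpow_add _ _ hU, Complex.cpow_two]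
    try ring_nf
  have rU1 : U ^ (a - 1) = U ^ (a - 2) * U := by
    rw [show a - 1 = (a - 2) + 1 by ring, Complex.cpow_add _ _ hU, Complex.cpow_one]
    try ring_nf
  have rV0 : (U + T) ^ b = (U + T) ^ (b - 2) * (U + T) ^ (2 : ℕ) := by
    rw [show b = (b - 2) + 2 by ring, Complex.cpow_add _ _ hV, Complex.cpow_two]
    try ring_nf
  have rV1 : (U + T) ^ (b - 1) = (U + T) ^ (b - 2) * (U + T) := by
    rw [show b - 1 = (b - 2) + 1 by ring, Complex.cpow_add _ _ hV, Complex.cpow_one]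
    try ring_nf
  have rT0 : T ^ c = T ^ (c - 1) * T := by
    rw [show c = (c - 1) + 1 by ring, Complex.cpow_add _ _ hT, Complex.cpow_one]
    try ring_nf
  have rT2 : T ^ (c + 2) = T ^ (c - 1) * T ^ (3 : ℕ) := by
    rw [show c + 2 = (c - 1) + (1 + 2) by ring, Complex.cpow_add _ _ hT,
      Complex.cpow_add _ _ hT, Complex.cpow_one, Complex.cpow_two]
    try ring_nf
  rw [rU0, rU1, rV0, rV1, rT0, rT2]
  set A := U ^ (a - 2) with hAdef
  set B := (U + T) ^ (b - 2) with hBdef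
  set C := T ^ (c - 1) with hCdef
  clear_value A B C
  rw [ha, hb, hc]
  obtain ⟨V, hv⟩ : ∃ V : ℂ, V = U + T := ⟨_, rfl⟩
  rw [← hv] at hV ⊢
  field_simp
  rw [hv]
  ring
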